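/- (The predictive forward representer lower-bounds the unnormalized predictive density.) Fix y ∈ E and suppose: (a) ∫ q(y,x) μ(dx) = 1; (b) α(x) ≤ π(x) for all x ∈ E; (c) ρ(x,y)·α(x) > 0 for μ-almost every x in the set {x : q(y,x) > 0}; (d) the function x ↦ q(y,x)·log(ρ(x,y)·α(x)/q(y,x)) (set to 0 where q(y,x) = 0) is μ-integrable, and log a(y) = ∫ q(y,x)·log(ρ(x,y)·α(x)/q(y,x)) μ(dx); (e) the function x ↦ ρ(x,y)·π(x) is μ-integrable. Then a(y) ≤ ∫ ρ(x,y)·π(x) μ(dx), i.e., the predictive representer value is dominated by the one-step prediction of π. -/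

import Mathlib

open MeasureTheory

/-- **The predictive forward representer lower-bounds the unnormalized predictive density.**
Let `ρ (x, y)` be the state transition density, `α` the (positive) forward value representer
at the previous time, `π` the unnormalized Bayesian filtering density at the previous time,
`q` a variational reverse-time kernel and `a` the (positive) predictive forward value
representer.  Fix `y ∈ E` and assume: (a) `∫ q (y, x) μ(dx) = 1`; (b) `α ≤ π`;
(c) `ρ (x,y) * α x > 0` for μ-a.e. `x` with `q (y,x) > 0`; (d) the Jensen integrand is
μ-integrable and `log (a y) = ∫ q (y,x) * log (ρ (x,y) * α x / q (y,x)) μ(dx)`;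
(e) `x ↦ ρ (x,y) * π x` is μ-integrable.  Then `a y ≤ ∫ ρ (x,y) * π x μ(dx)`. -/
theorem predictive_representer_le_predictive_density
    {E : Type*} [MeasurableSpace E] (μ : Measure E) [SigmaFinite μ]
    (ρ : E × E → ℝ) (hρm : Measurable ρ) (hρ0 : ∀ p, 0 ≤ ρ p)
    (α : E → ℝ) (hαm : Measurable α) (hα0 : ∀ x, 0 ≤ α x) (hαpos : ∀ x, 0 < α x)
    (π : E → ℝ) (hπm : Measurable π) (hπ0 : ∀ x, 0 ≤ π x)
    (q : E × E → ℝ) (hqm : Measurable q) (hq0 : ∀ p, 0 ≤ q p)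
    (a : E → ℝ) (hapos : ∀ y, 0 < a y)
    (y : E)
    (ha : (∫ x, q (y, x) ∂μ) = 1)
    (hb : ∀ x, α x ≤ π x)
    (hc : ∀ᵐ x ∂μ, 0 < q (y, x) → 0 < ρ (x, y) * α x)
    (hd₁ : Integrable
      (fun x => if q (y, x) = 0 then 0
                else q (y, x) * Real.log (ρ (x, y) * α x / q (y, x))) μ)
    (hd₂ : Real.log (a y) = ∫ x,
      (if q (y, x) = 0 then 0
       else q (y, x) * Real.log (ρ (x, y) * α x / q (y, x))) ∂μ)
    (he : Integrable (fun x => ρ (x, y) * π x) μ) :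
    a y ≤ ∫ x, ρ (x, y) * π x ∂μ := by
  set f : E → ℝ := fun x => ρ (x, y) * α x with hf_def
  set g : E → ℝ := fun x => q (y, x) with hg_def
  have hf0 : ∀ x, 0 ≤ f x := fun x => mul_nonneg (hρ0 _) (hα0 _)
  have hfm : Measurable f := (hρm.comp (measurable_id.prodMk measurable_const)).mul hαm
  have hgm : Measurable g := hqm.comp (measurable_const.prodMk measurable_id)
  have hfle : ∀ x, f x ≤ ρ (x, y) * π x := fun x =>
    mul_le_mul_of_nonneg_left (hb x) (hρ0 _)
  have hf_int : Integrable f μ := by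
    refine he.mono' hfm.aestronglyMeasurable (Filter.Eventually.of_forall fun x => ?_)
    rw [Real.norm_eq_abs, abs_of_nonneg (hf0 x)]
    exact hfle x
  have hg_int : Integrable g μ := by
    by_contra h
    rw [integral_undef h] at ha
    norm_num at ha
  set c : ℝ := ∫ x, f x ∂μ with hc_def
  have hc_le : c ≤ ∫ x, ρ (x, y) * π x ∂μ :=
    integral_mono hf_int he hfle
  have hgpos : ¬ (∀ᵐ x ∂μ, g x = 0) := by
    intro h
    have : (∫ x, g x ∂μ) = 0 := by
      rw [integral_congr_ae (h.mono fun x hx => hx)]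
      simp
    rw [ha] at this; norm_num at this
  have hc_pos : 0 < c := by
    rw [hc_def, integral_pos_iff_support_of_nonneg hf0 hf_int]
    by_contra h
    push_neg at h
    have h0 : μ (Function.support f) = 0 := le_antisymm h zero_le
    have hf_ae : ∀ᵐ x ∂μ, f x = 0 := by
      rw [ae_iff]
      simpa [Function.support] using h0
    apply hgpos
    filter_upwards [hf_ae, hc] with x hfx hcx
    by_contra hgx
    have : 0 < g x := lt_of_le_of_ne (hq0 _) (Ne.symm hgx)
    exact absurd hfx (ne_of_gt (hcx this))
  -- pointwise bound
  set φ : E → ℝ := fun x => if g x = 0 then 0 else g x * Real.log (f x / g x) with hφ_def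
  have hpt : ∀ᵐ x ∂μ, φ x ≤ f x / c - g x + g x * Real.log c := by
    filter_upwards [hc] with x hcx
    by_cases hgx : g x = 0
    · simp only [hφ_def, hgx, if_pos rfl]
      have : 0 ≤ f x / c := div_nonneg (hf0 x) hc_pos.le
      simp [hgx]; linarith
    · have hg_pos : 0 < g x := lt_of_le_of_ne (hq0 _) (Ne.symm hgx)
      have hf_pos : 0 < f x := hcx hg_pos
      simp only [hφ_def, if_neg hgx]
      have hlog : Real.log (f x / g x) = Real.log (f x / (c * g x)) + Real.log c := by
        rw [← Real.log_mul (by positivity) (ne_of_gt hc_pos)]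
        congr 1
        field_simp
      have hle : Real.log (f x / (c * g x)) ≤ f x / (c * g x) - 1 :=
        Real.log_le_sub_one_of_pos (by positivity)
      have := mul_le_mul_of_nonneg_left hle hg_pos.le
      have hid : g x * (f x / (c * g x)) = f x / c := by
        field_simp
      nlinarith [hg_pos.le]
  have h1 : Integrable (fun x => f x / c - g x) μ := by
    exact (hf_int.div_const c).sub hg_int
  have h2 : Integrable (fun x => g x * Real.log c) μ := hg_int.mul_const _
  have hrhs_int : Integrable (fun x => f x / c - g x + g x * Real.log c) μ := h1.add h2
  have hrhs_val : (∫ x, (f x / c - g x + g x * Real.log c) ∂μ) = Real.log c := by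
    rw [integral_add h1 h2, integral_sub (hf_int.div_const c) hg_int, integral_div,
        integral_mul_const, ← hc_def, ha, div_self (ne_of_gt hc_pos)]
    ring
  have hkey : Real.log (a y) ≤ Real.log c := by
    rw [hd₂]
    calc (∫ x, (if q (y, x) = 0 then 0
       else q (y, x) * Real.log (ρ (x, y) * α x / q (y, x))) ∂μ)
        = ∫ x, φ x ∂μ := rfl
      _ ≤ ∫ x, (f x / c - g x + g x * Real.log c) ∂μ := integral_mono_ae hd₁ hrhs_int hpt
      _ = Real.log c := hrhs_val
  have : a y ≤ c := by
    have := Real.exp_le_exp.mpr hkey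
    rwa [Real.exp_log (hapos y), Real.exp_log hc_pos] at this
  linarith
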